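/- For every function f : [t₀, ∞) → ℝ with t₀ > 0 and lim_{t→∞} f(t) = 0, there exists a function y : [t₀, ∞) → ℝ with y(t) = O(f(t)) as t → ∞, such that for all sufficiently large t in the domain of tan, (1 + f(t))·tan t = tan(t + y(t)). In fact y can be chosen with |y(t)| ≤ π·|f(t)| for all sufficiently large t. -/

import Mathlib

open Real Filter

lemma arctan_mvt_bound (x ε : ℝ) (hε : |ε| ≤ 1/2) :
    |Real.arctan ((1 + ε) * x) - Real.arctan x| ≤ |ε| := by
  have hd : ∀ s : ℝ, HasDerivAt (fun s : ℝ => Real.arctan (x + s * x))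
      (1 / (1 + (x + s * x) ^ 2) * x) s := by
    intro s
    have h1 : HasDerivAt (fun s : ℝ => x + s * x) x s := by
      simpa using ((hasDerivAt_id s).mul_const x).const_add x
    exact (Real.hasDerivAt_arctan (x + s * x)).comp s h1
  have hs : Convex ℝ (Set.Icc (-(1/2) : ℝ) (1/2)) := convex_Icc _ _
  have h0 : (0 : ℝ) ∈ Set.Icc (-(1/2) : ℝ) (1/2) := by norm_num
  have hεm : ε ∈ Set.Icc (-(1/2) : ℝ) (1/2) := abs_le.mp hε
  have key := hs.norm_image_sub_le_of_norm_hasDerivWithin_le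
    (f := fun s : ℝ => Real.arctan (x + s * x))
    (f' := fun s : ℝ => 1 / (1 + (x + s * x) ^ 2) * x) (C := 1)
    (fun c _ => (hd c).hasDerivWithinAt)
    (fun c hc => by
      have hc1 : -(1/2 : ℝ) ≤ c := hc.1
      have hc2 : c ≤ (1/2 : ℝ) := hc.2
      have hpos : (0 : ℝ) < 1 + (x + c * x) ^ 2 := by positivity
      rw [Real.norm_eq_abs, abs_mul, abs_of_pos (by positivity : (0:ℝ) < 1 / (1 + (x + c*x)^2))]
      rw [div_mul_eq_mul_div, one_mul, div_le_one hpos]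
      nlinarith [sq_nonneg (x + c * x), sq_nonneg (|x| - 2), sq_abs x,
        sq_nonneg ((1 + c) * x), sq_nonneg x, abs_nonneg x,
        mul_self_nonneg ((1/2 + c) * x)]) h0 hεm
  have : Real.arctan ((1 + ε) * x) = Real.arctan (x + ε * x) := by ring_nf
  rw [this]
  simpa [Real.norm_eq_abs] using key

theorem tan_multiplicative_shift (t₀ : ℝ) (ht₀ : 0 < t₀) (f : ℝ → ℝ)
    (hf : Tendsto f atTop (nhds 0)) :
    ∃ y : ℝ → ℝ, (∀ᶠ t in atTop, |y t| ≤ π * |f t|) ∧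
      ∀ᶠ t in atTop, (∀ k : ℤ, t ≠ k * π + π / 2) →
        (1 + f t) * Real.tan t = Real.tan (t + y t) := by
  refine ⟨fun t => Real.arctan ((1 + f t) * Real.tan t) - Real.arctan (Real.tan t), ?_, ?_⟩
  · have hsmall : ∀ᶠ t in atTop, |f t| ≤ 1/2 := by
      have := Metric.tendsto_nhds.mp hf (1/2) (by norm_num)
      filter_upwards [this] with t ht
      rw [Real.dist_eq, sub_zero] at ht
      linarith
    filter_upwards [hsmall] with t ht
    calc |Real.arctan ((1 + f t) * Real.tan t) - Real.arctan (Real.tan t)| ≤ |f t| :=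
        arctan_mvt_bound _ _ ht
      _ ≤ π * |f t| := by nlinarith [Real.pi_gt_three, abs_nonneg (f t)]
  · refine Filter.Eventually.of_forall fun t hdom => ?_
    set k : ℤ := round (t / π) with hk
    have hπ : (0:ℝ) < π := Real.pi_pos
    have habs : |t / π - k| ≤ 1/2 := abs_sub_round (t / π)
    have habs' : |t - k * π| ≤ π / 2 := by
      have := abs_le.mp habs
      rw [abs_le]
      constructor
      · have := this.1
        rw [div_sub' hπ.ne', le_div_iff₀ hπ] at this
        nlinarith
      · have := this.2
        rw [div_sub' hπ.ne', div_le_iff₀ hπ] at this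
        nlinarith
    have hlt1 : -(π/2) < t - k * π := by
      rcases lt_or_eq_of_le (abs_le.mp habs').1 with h | h
      · linarith
      · exfalso; exact hdom (k - 1) (by push_cast; linarith)
    have hlt2 : t - k * π < π/2 := by
      rcases lt_or_eq_of_le (abs_le.mp habs').2 with h | h
      · exact h
      · exfalso; exact hdom k (by linarith)
    have htan : Real.tan (t - k * π) = Real.tan t := by
      simpa using Real.tan_periodic.sub_int_mul_eq k (x := t)
    have harctan : Real.arctan (Real.tan t) = t - k * π := by
      rw [← htan, Real.arctan_tan hlt1 hlt2]
    show (1 + f t) * Real.tan t =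
      Real.tan (t + (Real.arctan ((1 + f t) * Real.tan t) - Real.arctan (Real.tan t)))
    rw [harctan]
    have heq : t + (Real.arctan ((1 + f t) * Real.tan t) - (t - k * π)) =
        Real.arctan ((1 + f t) * Real.tan t) + (k : ℝ) * π := by ring
    rw [heq, Real.tan_periodic.int_mul k, Real.tan_arctan]
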